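/- Every projection-valued measure is extreme in the convex set of POVMs: if P = (P_1, ..., P_N) is a PVM on a Hilbert space H (each P_i an orthogonal projection, P_i P_j = δ_{ij} P_i, ∑ P_i = I) and P = t M' + (1-t) M'' for POVMs M', M'' and t ∈ (0,1), then M' = M'' = P. -/

import Mathlib

open scoped InnerProductSpace

/-- A positive operator vanishing in the quadratic form at `x` kills `x`. -/
lemma pos_op_apply_eq_zero
    {H : Type*} [NormedAddCommGroup H] [InnerProductSpace ℂ H] [CompleteSpace H]
    {T : H →L[ℂ] H} (hT : T.IsPositive) {x : H}
    (hx : RCLike.re ⟪T x, x⟫_ℂ = 0) : T x = 0 := by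
  have hsymm : ∀ a b : H, ⟪T a, b⟫_ℂ = ⟪a, T b⟫_ℂ :=
    (ContinuousLinearMap.isSelfAdjoint_iff_isSymmetric.mp hT.isSelfAdjoint)
  letI c : PreInnerProductSpace.Core ℂ H :=
    { inner := fun a b => ⟪a, T b⟫_ℂ
      conj_inner_symm := fun a b => by
        show (starRingEnd ℂ) ⟪b, T a⟫_ℂ = ⟪a, T b⟫_ℂ
        rw [inner_conj_symm, hsymm]
      re_inner_nonneg := fun a => by
        show 0 ≤ RCLike.re ⟪a, T a⟫_ℂ
        exact hT.re_inner_nonneg_right a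
      add_left := fun a b z => inner_add_left _ _ _
      smul_left := fun a b r => inner_smul_left _ _ _ }
  have cs := @InnerProductSpace.Core.inner_mul_inner_self_le ℂ H _ _ _ c (T x) x
  have hxx : RCLike.re ⟪x, T x⟫_ℂ = 0 := by
    rw [← hsymm]; exact hx
  have key : ‖⟪T x, T x⟫_ℂ‖ * ‖⟪x, T (T x)⟫_ℂ‖ ≤ 0 := by
    calc ‖⟪T x, T x⟫_ℂ‖ * ‖⟪x, T (T x)⟫_ℂ‖
        ≤ RCLike.re ⟪T x, T (T x)⟫_ℂ * RCLike.re ⟪x, T x⟫_ℂ := cs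
      _ = 0 := by rw [hxx, mul_zero]
  have h1 : ⟪T x, T x⟫_ℂ = 0 := by
    by_contra h
    have h1 : 0 < ‖⟪T x, T x⟫_ℂ‖ := norm_pos_iff.mpr h
    have h2 : ‖⟪x, T (T x)⟫_ℂ‖ = ‖⟪T x, T x⟫_ℂ‖ := by
      rw [← hsymm]
    nlinarith
  exact inner_self_eq_zero.mp h1

/-- If a convex combination of positive operators kills `x`, each kills `x`. -/
lemma convex_comb_apply_eq_zero
    {H : Type*} [NormedAddCommGroup H] [InnerProductSpace ℂ H] [CompleteSpace H]
    {A B C : H →L[ℂ] H} {t : ℝ} (ht0 : 0 < t) (ht1 : t < 1)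
    (hB : B.IsPositive) (hC : C.IsPositive)
    (hA : A = (t : ℂ) • B + ((1 - t : ℝ) : ℂ) • C)
    {x : H} (hx : A x = 0) : B x = 0 ∧ C x = 0 := by
  have hb := hB.re_inner_nonneg_left x
  have hc := hC.re_inner_nonneg_left x
  have h0 : RCLike.re ⟪A x, x⟫_ℂ = 0 := by rw [hx, inner_zero_left]; simp
  have hexp : RCLike.re ⟪A x, x⟫_ℂ =
      t * RCLike.re ⟪B x, x⟫_ℂ + (1 - t) * RCLike.re ⟪C x, x⟫_ℂ := by
    rw [hA]
    simp only [ContinuousLinearMap.add_apply, ContinuousLinearMap.coe_smul',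
      Pi.smul_apply, inner_add_left, inner_smul_left, map_add, Complex.conj_ofReal,
      RCLike.re_to_complex, Complex.add_re, Complex.mul_re, Complex.ofReal_re,
      Complex.ofReal_im]
    ring
  rw [hexp] at h0
  have hB0 : RCLike.re ⟪B x, x⟫_ℂ = 0 := by nlinarith
  have hC0 : RCLike.re ⟪C x, x⟫_ℂ = 0 := by nlinarith
  exact ⟨pos_op_apply_eq_zero hB hB0, pos_op_apply_eq_zero hC hC0⟩

/-- Every PVM is extreme in the convex set of POVMs. -/
theorem pvm_extreme
    {H : Type*} [NormedAddCommGroup H] [InnerProductSpace ℂ H] [CompleteSpace H]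
    (N : ℕ) (P M' M'' : Fin N → H →L[ℂ] H)
    (hPsa : ∀ i, IsSelfAdjoint (P i))
    (hPorth : ∀ i j, P i * P j = if i = j then P i else 0)
    (hPsum : ∑ i, P i = 1)
    (hM'pos : ∀ i, (M' i).IsPositive) (hM'sum : ∑ i, M' i = 1)
    (hM''pos : ∀ i, (M'' i).IsPositive) (hM''sum : ∑ i, M'' i = 1)
    (t : ℝ) (ht0 : 0 < t) (ht1 : t < 1)
    (hconv : ∀ i, P i = (t : ℂ) • M' i + ((1 - t : ℝ) : ℂ) • M'' i) :
    M' = P ∧ M'' = P := by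
  have key : ∀ i, M' i = P i ∧ M'' i = P i := by
    intro i
    have hidem : P i * P i = P i := by simpa using hPorth i i
    have hPP : ∀ x : H, P i (P i x) = P i x := by
      intro x
      have := congrArg (fun T : H →L[ℂ] H => T x) hidem
      simpa using this
    have hsub : ∀ (M : Fin N → H →L[ℂ] H), (∑ j, M j = 1) → (∀ j, (M j).IsPositive) →
        ((1 : H →L[ℂ] H) - M i).IsPositive := by
      intro M hsum hpos
      have : (1 : H →L[ℂ] H) - M i = ∑ j ∈ Finset.univ.erase i, M j := by
        rw [← hsum, Finset.sum_erase_eq_sub (Finset.mem_univ i)]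
      rw [this]
      exact Finset.sum_induction _ _ (fun a b ha hb => ha.add hb)
        ContinuousLinearMap.isPositive_zero (fun j _ => hpos j)
    have h1M' := hsub M' hM'sum hM'pos
    have h1M'' := hsub M'' hM''sum hM''pos
    have hcast : ((1 - t : ℝ) : ℂ) = 1 - (t : ℂ) := by push_cast; ring
    have hconv' : (1 : H →L[ℂ] H) - P i =
        (t : ℂ) • ((1 : H →L[ℂ] H) - M' i) + ((1 - t : ℝ) : ℂ) • ((1 : H →L[ℂ] H) - M'' i) := by
      rw [hconv i, hcast]
      module
    have main : ∀ x : H, M' i x = P i x ∧ M'' i x = P i x := by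
      intro x
      have hz : P i (x - P i x) = 0 := by
        simp [map_sub, hPP x]
      obtain ⟨hz', hz''⟩ := convex_comb_apply_eq_zero ht0 ht1 (hM'pos i) (hM''pos i)
        (hconv i) hz
      have hy : ((1 : H →L[ℂ] H) - P i) (P i x) = 0 := by
        simp [ContinuousLinearMap.sub_apply, hPP x]
      obtain ⟨hy', hy''⟩ := convex_comb_apply_eq_zero ht0 ht1 h1M' h1M'' hconv' hy
      rw [ContinuousLinearMap.sub_apply, ContinuousLinearMap.one_apply, sub_eq_zero] at hy' hy''
      constructor
      · have h : M' i x = M' i (P i x) + M' i (x - P i x) := by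
          rw [← map_add]; congr 1; abel
        rw [h, ← hy', hz', add_zero]
      · have h : M'' i x = M'' i (P i x) + M'' i (x - P i x) := by
          rw [← map_add]; congr 1; abel
        rw [h, ← hy'', hz'', add_zero]
    exact ⟨ContinuousLinearMap.ext fun x => (main x).1,
           ContinuousLinearMap.ext fun x => (main x).2⟩
  exact ⟨funext fun i => (key i).1, funext fun i => (key i).2⟩
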